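/- The completely metrizable space X = (ℶ_ω)^ω, the countable power of the discrete space of cardinality ℶ_ω, contains a (metrizable) subspace Y without countable separation. In particular, there exists a metrizable space without countable separation. -/

import Mathlib

open Topology Set

universe u v

/-- `f` is quasicontinuous at `x`. -/
def QuasiContinuousAt {X : Type*} {Y : Type*} [TopologicalSpace X] [TopologicalSpace Y]
    (f : X → Y) (x : X) : Prop :=
  ∀ Ox ∈ nhds x, ∀ Oy ∈ nhds (f x),
    ∃ U : Set X, IsOpen U ∧ U.Nonempty ∧ U ⊆ Ox ∧ f '' U ⊆ Oy

/-- `f` is quasicontinuous. -/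
def QuasiContinuous {X Y : Type*} [TopologicalSpace X] [TopologicalSpace Y] (f : X → Y) : Prop :=
  ∀ x, QuasiContinuousAt f x

/-- The set of continuity points of a map. -/
def ContinuityPoints {Z X : Type*} [TopologicalSpace Z] [TopologicalSpace X] (f : Z → X) :
    Set Z :=
  {z | ContinuousAt f z}

/-- A multivalued map (represented as `Φ : Z → Set X`) is usco if it has nonempty compact
values and is upper semicontinuous. -/
def IsUsco {Z X : Type*} [TopologicalSpace Z] [TopologicalSpace X] (Φ : Z → Set X) : Prop :=
  (∀ z, (Φ z).Nonempty) ∧ (∀ z, IsCompact (Φ z)) ∧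
    ∀ U : Set X, IsOpen U → IsOpen {z | Φ z ⊆ U}

/-- A minimal usco map. -/
def IsMinimalUsco {Z X : Type*} [TopologicalSpace Z] [TopologicalSpace X] (Φ : Z → Set X) :
    Prop :=
  IsUsco Φ ∧ ∀ Ψ : Z → Set X, IsUsco Ψ → (∀ z, Ψ z ⊆ Φ z) → Ψ = Φ

/-- `Φ` is single-valued at `z`. -/
def SingleValuedAt {Z X : Type*} (Φ : Z → Set X) (z : Z) : Prop := ∃ x, Φ z = {x}

/-- A class of topological spaces (in universe `u`). -/
def SpaceClass : Type (u + 1) := ∀ Z : Type u, TopologicalSpace Z → Prop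

/-- All members of the class are Baire spaces. -/
def IsBaireClass (P : SpaceClass.{u}) : Prop :=
  ∀ (Z : Type u) [tZ : TopologicalSpace Z], P Z tZ → BaireSpace Z

/-- The class is closed under taking open subspaces. -/
def ClosedUnderOpenSubspaces (P : SpaceClass.{u}) : Prop :=
  ∀ (Z : Type u) [tZ : TopologicalSpace Z], P Z tZ →
    ∀ U : Set Z, IsOpen U → P ↥U inferInstance

/-- The class is closed under taking dense `Gδ`-subspaces. -/
def ClosedUnderDenseGdelta (P : SpaceClass.{u}) : Prop :=
  ∀ (Z : Type u) [tZ : TopologicalSpace Z], P Z tZ →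
    ∀ S : Set Z, Dense S → IsGδ S → P ↥S inferInstance

/-- The class is closed under taking dense Baire subspaces. -/
def ClosedUnderDenseBaire (P : SpaceClass.{u}) : Prop :=
  ∀ (Z : Type u) [tZ : TopologicalSpace Z], P Z tZ →
    ∀ S : Set Z, Dense S → BaireSpace ↥S → P ↥S inferInstance

/-- `X` is `𝒞`-Piotrowski: every quasicontinuous map from a nonempty member of the class `𝒞`
to `X` has a continuity point. -/
def IsPiotrowskiFor (P : SpaceClass.{u}) (X : Type v) [TopologicalSpace X] : Prop :=
  ∀ (Z : Type u) [tZ : TopologicalSpace Z], P Z tZ → Nonempty Z →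
    ∀ f : Z → X, QuasiContinuous f → ∃ z, ContinuousAt f z

/-- `X` is strong `𝒞`-Piotrowski: for every quasicontinuous map from a member of `𝒞` to `X`
the set of continuity points is comeager. -/
def IsStrongPiotrowskiFor (P : SpaceClass.{u}) (X : Type v) [TopologicalSpace X] : Prop :=
  ∀ (Z : Type u) [tZ : TopologicalSpace Z], P Z tZ →
    ∀ f : Z → X, QuasiContinuous f → ContinuityPoints f ∈ residual Z

/-- `X` is `𝒞`-Stegall. -/
def IsStegallFor (P : SpaceClass.{u}) (X : Type v) [TopologicalSpace X] : Prop :=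
  ∀ (Z : Type u) [tZ : TopologicalSpace Z], P Z tZ → Nonempty Z →
    ∀ Φ : Z → Set X, IsMinimalUsco Φ → ∃ z, SingleValuedAt Φ z

/-- `X` is strong `𝒞`-Stegall. -/
def IsStrongStegallFor (P : SpaceClass.{u}) (X : Type v) [TopologicalSpace X] : Prop :=
  ∀ (Z : Type u) [tZ : TopologicalSpace Z], P Z tZ →
    ∀ Φ : Z → Set X, IsMinimalUsco Φ → {z | SingleValuedAt Φ z} ∈ residual Z

/-- The class of all Baire spaces (in universe `u`). -/
def BaireClass : SpaceClass.{u} := fun Z tZ => @BaireSpace Z tZ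

/-- `X` is Piotrowski. -/
def IsPiotrowski (X : Type v) [TopologicalSpace X] : Prop :=
  IsPiotrowskiFor BaireClass.{u} X

/-- `d` is a metric on `X` (not necessarily related to the topology of `X`). -/
structure IsMetric {X : Type*} (d : X → X → ℝ) : Prop where
  self : ∀ x, d x x = 0
  eq_of : ∀ x y, d x y = 0 → x = y
  symm : ∀ x y, d x y = d y x
  triangle : ∀ x y z, d x z ≤ d x y + d y z

/-- `X` is fragmented by `d`: every nonempty subset has a nonempty relatively open subset of
`d`-diameter `< ε`. -/
def FragmentedBy (X : Type*) [TopologicalSpace X] (d : X → X → ℝ) : Prop :=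
  ∀ ε : ℝ, 0 < ε → ∀ A : Set X, A.Nonempty →
    ∃ V : Set X, IsOpen V ∧ (A ∩ V).Nonempty ∧ ∀ x ∈ A ∩ V, ∀ y ∈ A ∩ V, d x y < ε

/-- The topology generated by `d` is finer than the topology of `X`. -/
def MetricTopFiner (X : Type*) [TopologicalSpace X] (d : X → X → ℝ) : Prop :=
  ∀ U : Set X, IsOpen U → ∀ x ∈ U, ∃ ε : ℝ, 0 < ε ∧ {y | d x y < ε} ⊆ U

/-- `X` is fragmentable. -/
def Fragmentable (X : Type*) [TopologicalSpace X] : Prop :=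
  ∃ d : X → X → ℝ, IsMetric d ∧ FragmentedBy X d

/-- `X` is strictly fragmented by the metric `d`. -/
def StrictlyFragmentedBy (X : Type*) [TopologicalSpace X] (d : X → X → ℝ) : Prop :=
  IsMetric d ∧ FragmentedBy X d ∧ MetricTopFiner X d

/-- `X` is strictly fragmentable. -/
def StrictlyFragmentable (X : Type*) [TopologicalSpace X] : Prop :=
  ∃ d : X → X → ℝ, StrictlyFragmentedBy X d

/-- The countable family `𝒰` separates the points of `S` from the points of `Sᶜ`:
some member of the family contains exactly one point of any pair `x ∈ S`, `y ∉ S`. -/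
def SeparatesFrom {K : Type*} (𝒰 : ℕ → Set K) (S : Set K) : Prop :=
  ∀ x ∈ S, ∀ y ∈ Sᶜ, ∃ n, (x ∈ 𝒰 n ∧ y ∉ 𝒰 n) ∨ (x ∉ 𝒰 n ∧ y ∈ 𝒰 n)

/-- `X` has countable separation: some compactification `K` of `X` carries a countable family
of open sets separating the points of (the copy of) `X` from the points of `K \ X`. -/
def HasCountableSeparation (X : Type u) [TopologicalSpace X] : Prop :=
  ∃ (K : Type u) (tK : TopologicalSpace K), @CompactSpace K tK ∧ @T2Space K tK ∧
    ∃ e : X → K, @Topology.IsEmbedding X K _ tK e ∧ @DenseRange K tK X e ∧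
      ∃ 𝒰 : ℕ → Set K, (∀ n, @IsOpen K tK (𝒰 n)) ∧ SeparatesFrom 𝒰 (Set.range e)

/-- The beth numbers with finite index: `ℶ_0 = ℵ₀`, `ℶ_{n+1} = 2 ^ ℶ_n`. -/
def bethNat : ℕ → Cardinal.{0}
  | 0 => Cardinal.aleph0
  | n + 1 => 2 ^ bethNat n

/-- `ℶ_ω = sup_{n ∈ ω} ℶ_n`. -/
noncomputable def bethOmega : Cardinal.{0} := ⨆ n : ℕ, bethNat n

/-- A (discrete) set of cardinality `ℶ_ω`. -/
noncomputable def BethOmegaType : Type := Quotient.out bethOmega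

instance : TopologicalSpace BethOmegaType := ⊥

instance : DiscreteTopology BethOmegaType := ⟨rfl⟩

section BethAux

open Cardinal

private abbrev PP : Type := ℕ → BethOmegaType

private lemma bethNat_le_bethOmega (n : ℕ) : bethNat n ≤ bethOmega :=
  le_ciSup (Cardinal.bddAbove_range bethNat) n

private lemma aleph0_le_bethOmega : Cardinal.aleph0 ≤ bethOmega :=
  bethNat_le_bethOmega 0

/-- Cylinders in the product space. -/
private def cylx (x : PP) (m : ℕ) : Set PP := {y | ∀ i < m, y i = x i}

private lemma mem_cylx_self (x : PP) (m : ℕ) : x ∈ cylx x m := fun _ _ => rfl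

private lemma cylx_mono {x : PP} {m m' : ℕ} (h : m' ≤ m) : cylx x m ⊆ cylx x m' :=
  fun _ hy i hi => hy i (lt_of_lt_of_le hi h)

private lemma cylx_eq (x : PP) (m : ℕ) :
    cylx x m = ⋂ i : Fin m, (fun y : PP => y i) ⁻¹' {x i} := by
  ext y
  simp only [cylx, mem_setOf_eq, mem_iInter, mem_preimage, mem_singleton_iff]
  exact ⟨fun h i => h i i.2, fun h i hi => h ⟨i, hi⟩⟩

private lemma isOpen_cylx (x : PP) (m : ℕ) : IsOpen (cylx x m) := by
  rw [cylx_eq]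
  exact isOpen_iInter_of_finite fun i =>
    (isOpen_discrete _).preimage (continuous_apply (i : ℕ))

private lemma isClosed_cylx (x : PP) (m : ℕ) : IsClosed (cylx x m) := by
  rw [cylx_eq]
  exact isClosed_iInter fun i =>
    (isClosed_discrete _).preimage (continuous_apply (i : ℕ))

private lemma exists_cylx_subset {U : Set PP} (hU : IsOpen U) {x : PP} (hx : x ∈ U) :
    ∃ m, cylx x m ⊆ U := by
  obtain ⟨I, u, hu, hsub⟩ := isOpen_pi_iff.mp hU x hx
  refine ⟨I.sup id + 1, fun y hy => hsub fun i hi => ?_⟩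
  have hlt : i < I.sup id + 1 := Nat.lt_succ_of_le (Finset.le_sup (f := id) hi)
  rw [hy i hlt]
  exact (hu i hi).2

/-- Cylinders indexed by lists, used for counting open sets. -/
private def listCyl (l : List BethOmegaType) : Set PP :=
  {y | ∀ i, ∀ h : i < l.length, y i = l.get ⟨i, h⟩}

private lemma listCyl_ofFn (x : PP) (m : ℕ) :
    listCyl (List.ofFn fun i : Fin m => x i) = cylx x m := by
  ext y
  simp only [listCyl, cylx, mem_setOf_eq]
  constructor
  · intro h i hi
    have hlen : i < (List.ofFn fun i : Fin m => x i).length := by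
      simpa [List.length_ofFn] using hi
    have := h i hlen
    rw [List.get_ofFn] at this
    simpa using this
  · intro h i hlen
    rw [List.get_ofFn]
    exact h i (by simpa [List.length_ofFn] using hlen)

private lemma isOpen_listCyl (l : List BethOmegaType) : IsOpen (listCyl l) := by
  have : listCyl l = ⋂ i : Fin l.length, (fun y : PP => y i) ⁻¹' {l.get i} := by
    ext y
    simp only [listCyl, mem_setOf_eq, mem_iInter, mem_preimage, mem_singleton_iff]
    exact ⟨fun h i => h i i.2, fun h i hi => h ⟨i, hi⟩⟩
  rw [this]
  exact isOpen_iInter_of_finite fun i =>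
    (isOpen_discrete _).preimage (continuous_apply ((i : ℕ)))

private lemma mk_opens_le : #{U : Set PP // IsOpen U} ≤ 2 ^ bethOmega := by
  have hmk : #BethOmegaType = bethOmega := Cardinal.mk_out bethOmega
  have hinf : Infinite BethOmegaType := by
    rw [Cardinal.infinite_iff, hmk]
    exact aleph0_le_bethOmega
  have hsurj : Function.Surjective (fun S : Set (List BethOmegaType) =>
      (⟨⋃ l ∈ S, listCyl l, isOpen_biUnion fun l _ => isOpen_listCyl l⟩ :
        {U : Set PP // IsOpen U})) := by
    rintro ⟨U, hU⟩
    refine ⟨{l | listCyl l ⊆ U}, Subtype.ext ?_⟩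
    apply subset_antisymm
    · exact iUnion₂_subset fun l hl => hl
    · intro p hp
      obtain ⟨m, hm⟩ := exists_cylx_subset hU hp
      refine mem_iUnion₂.mpr ⟨List.ofFn (fun i : Fin m => p i), ?_, ?_⟩
      · rw [mem_setOf_eq, listCyl_ofFn]
        exact hm
      · rw [listCyl_ofFn]
        exact mem_cylx_self p m
  calc #{U : Set PP // IsOpen U} ≤ #(Set (List BethOmegaType)) :=
        Cardinal.mk_le_of_surjective hsurj
    _ = 2 ^ #(List BethOmegaType) := Cardinal.mk_set
    _ = 2 ^ bethOmega := by rw [Cardinal.mk_list_eq_mk, hmk]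

/-- Every subspace of `(ℶ_ω)^ω` with countable separation is a union, over patterns
`σ : Set ℕ`, of countable intersections of open-or-closed subsets of `(ℶ_ω)^ω`. -/
private lemma decomposition (Y : Set PP) (h : HasCountableSeparation ↥Y) :
    ∃ f : Set ℕ → ℕ → Set PP,
      (∀ σ n, IsOpen (f σ n) ∨ IsClosed (f σ n)) ∧ Y = ⋃ σ, ⋂ n, f σ n := by
  classical
  obtain ⟨K, tK, hcomp, ht2, e, hemb, -, 𝒰, hopen, hsep⟩ := h
  letI := tK
  haveI := hcomp
  haveI := ht2
  -- the `σ`-atoms of the family `𝒰`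
  set A : Set ℕ → Set K := fun σ => {k | ∀ n, k ∈ 𝒰 n ↔ n ∈ σ} with hAdef
  -- realized patterns
  set T : Set (Set ℕ) := {σ | ∃ y : ↥Y, ∀ n, e y ∈ 𝒰 n ↔ n ∈ σ} with hTdef
  have hAsub : ∀ σ ∈ T, A σ ⊆ Set.range e := by
    rintro σ ⟨y₀, hy₀⟩ k hk
    by_contra hkr
    obtain ⟨n, hn⟩ := hsep (e y₀) ⟨y₀, rfl⟩ k hkr
    have hk' : ∀ n, k ∈ 𝒰 n ↔ n ∈ σ := hk
    rcases hn with ⟨h1, h2⟩ | ⟨h1, h2⟩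
    · exact h2 ((hk' n).mpr ((hy₀ n).mp h1))
    · exact h1 ((hy₀ n).mpr ((hk' n).mp h2))
  -- decomposition of each piece
  have key : ∀ σ ∈ T, ∃ g : ℕ → Set PP,
      (∀ n, IsOpen (g n) ∨ IsClosed (g n)) ∧
      Subtype.val '' (e ⁻¹' A σ) = ⋂ n, g n := by
    intro σ hσT
    set B' : Set PP := Subtype.val '' (e ⁻¹' A σ) with hB'def
    set G : ℕ → Set K := fun n => if n ∈ σ then 𝒰 n else Set.univ with hGdef
    have hGopen : ∀ n, IsOpen (G n) := by
      intro n
      by_cases hn : n ∈ σ <;> simp only [hGdef, if_pos, if_neg, hn, ite_true, ite_false]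
      · exact hopen n
      · exact isOpen_univ
    have hA_iff : ∀ k : K, k ∈ A σ ↔ ((∀ n, n ∉ σ → k ∉ 𝒰 n) ∧ ∀ n, k ∈ G n) := by
      intro k
      simp only [hAdef, mem_setOf_eq]
      constructor
      · intro hk
        refine ⟨fun n hn hkn => hn ((hk n).mp hkn), fun n => ?_⟩
        by_cases hn : n ∈ σ
        · simp only [hGdef, if_pos hn]
          exact (hk n).mpr hn
        · simp only [hGdef, if_neg hn]
          exact mem_univ k
      · rintro ⟨h1, h2⟩ n
        constructor
        · intro hkn
          by_contra hn
          exact h1 n hn hkn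
        · intro hn
          have := h2 n
          simpa only [hGdef, if_pos hn] using this
    -- the open sets O n
    set O : ℕ → Set PP := fun n => {z | ∃ x mm, n ≤ mm ∧ z ∈ cylx x mm ∧
      ∃ W : Set K, IsOpen W ∧ closure W ⊆ G n ∧
        ∀ y : ↥Y, (y : PP) ∈ cylx x mm → e y ∈ A σ → e y ∈ W} with hOdef
    have hOopen : ∀ n, IsOpen (O n) := by
      intro n
      rw [isOpen_iff_forall_mem_open]
      rintro z ⟨x, mm, hm, hz, hc⟩
      exact ⟨cylx x mm, fun w hw => ⟨x, mm, hm, hw, hc⟩, isOpen_cylx x mm, hz⟩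
    -- first inclusion
    have hsub1 : B' ⊆ closure B' ∩ ⋂ n, O n := by
      rintro b ⟨y₀, hy₀, rfl⟩
      refine ⟨subset_closure ⟨y₀, hy₀, rfl⟩, mem_iInter.mpr fun n => ?_⟩
      have hG : e y₀ ∈ G n := ((hA_iff _).mp hy₀).2 n
      obtain ⟨t, htn, htc, hts⟩ :=
        exists_mem_nhds_isClosed_subset ((hGopen n).mem_nhds hG)
      have hWcl : closure (interior t) ⊆ G n :=
        (closure_mono interior_subset).trans (le_of_eq htc.closure_eq) |>.trans hts
      have hpre : IsOpen (e ⁻¹' interior t) := isOpen_interior.preimage hemb.continuous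
      obtain ⟨V, hVopen, hVeq⟩ := Topology.IsInducing.subtypeVal.isOpen_iff.mp hpre
      have hbV : (y₀ : PP) ∈ V := by
        have : y₀ ∈ Subtype.val ⁻¹' V := by
          rw [hVeq]
          exact mem_preimage.mpr (mem_interior_iff_mem_nhds.mpr htn)
        exact this
      obtain ⟨m', hm'⟩ := exists_cylx_subset hVopen hbV
      refine ⟨(y₀ : PP), max n m', le_max_left _ _, mem_cylx_self _ _,
        interior t, isOpen_interior, hWcl, ?_⟩
      intro y hy _
      have hyV : (y : PP) ∈ V := hm' (cylx_mono (le_max_right n m') hy)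
      have : y ∈ Subtype.val ⁻¹' V := hyV
      rw [hVeq] at this
      exact this
    -- second inclusion
    have hsub2 : closure B' ∩ ⋂ n, O n ⊆ B' := by
      rintro z ⟨hzZ, hzO⟩
      rw [mem_iInter] at hzO
      simp only [hOdef, mem_setOf_eq] at hzO
      choose x m hm hzc W hWo hWG hWim using hzO
      set E : ℕ → Set ↥Y := fun n =>
        {y | e y ∈ A σ ∧ ∀ k ≤ n, (y : PP) ∈ cylx (x k) (m k)} with hEdef
      have hEne : ∀ n, (E n).Nonempty := by
        intro n
        have hop : IsOpen (⋂ k : Fin (n + 1), cylx (x k) (m k)) :=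
          isOpen_iInter_of_finite fun k => isOpen_cylx _ _
        have hzin : z ∈ ⋂ k : Fin (n + 1), cylx (x k) (m k) :=
          mem_iInter.mpr fun k => hzc k
        obtain ⟨b, hbO, hbB⟩ := mem_closure_iff.mp hzZ _ hop hzin
        obtain ⟨y, hyA, rfl⟩ := hbB
        exact ⟨y, hyA, fun k hk => mem_iInter.mp hbO ⟨k, Nat.lt_succ_of_le hk⟩⟩
      have hEdec : ∀ n, E (n + 1) ⊆ E n := by
        intro n y hy
        exact ⟨hy.1, fun k hk => hy.2 k (hk.trans (Nat.le_succ n))⟩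
      obtain ⟨f, hf⟩ := IsCompact.nonempty_iInter_of_sequence_nonempty_isCompact_isClosed
        (fun n => closure (e '' E n))
        (fun n => closure_mono (image_mono (hEdec n)))
        (fun n => ((hEne n).image e).closure)
        isClosed_closure.isCompact (fun _ => isClosed_closure)
      have hfn : ∀ n, f ∈ closure (e '' E n) := mem_iInter.mp hf
      have hfG : ∀ n, f ∈ G n := by
        intro n
        refine hWG n (closure_mono ?_ (hfn n))
        rintro - ⟨y, hy, rfl⟩
        exact hWim n y (hy.2 n le_rfl) hy.1
      have hfF : ∀ n, n ∉ σ → f ∉ 𝒰 n := by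
        intro n hn
        have hsubc : e '' E 0 ⊆ (𝒰 n)ᶜ := by
          rintro - ⟨y, hy, rfl⟩
          exact ((hA_iff _).mp hy.1).1 n hn
        have := closure_mono hsubc (hfn 0)
        rwa [(hopen n).isClosed_compl.closure_eq] at this
      have hfA : f ∈ A σ := (hA_iff f).mpr ⟨hfF, hfG⟩
      obtain ⟨ystar, hystar⟩ := hAsub σ hσT hfA
      have hyA : e ystar ∈ A σ := by rw [hystar]; exact hfA
      have hyC : ∀ n, (ystar : PP) ∈ cylx (x n) (m n) := by
        intro n
        have h1 : ystar ∈ closure (E n) := by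
          rw [hemb.closure_eq_preimage_closure_image]
          exact mem_preimage.mpr (by rw [hystar]; exact hfn n)
        have h2 : (ystar : PP) ∈ closure (Subtype.val '' E n) :=
          image_closure_subset_closure_image continuous_subtype_val ⟨ystar, h1, rfl⟩
        have h3 : Subtype.val '' E n ⊆ cylx (x n) (m n) := by
          rintro - ⟨y, hy, rfl⟩
          exact hy.2 n le_rfl
        exact (isClosed_cylx _ _).closure_subset_iff.mpr h3 h2
      have hz : z = (ystar : PP) := by
        funext i
        have hlt : i < m (i + 1) :=
          lt_of_lt_of_le (Nat.lt_succ_self i) (hm (i + 1))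
        have h1 := hzc (i + 1) i hlt
        have h2 := hyC (i + 1) i hlt
        rw [h1, h2]
      rw [hz]
      exact ⟨ystar, hyA, rfl⟩
    -- assemble g
    refine ⟨fun n => Nat.rec (closure B') (fun k _ => O k) n, fun n => ?_, ?_⟩
    · cases n with
      | zero => exact Or.inr isClosed_closure
      | succ k => exact Or.inl (hOopen k)
    · have hseteq : (⋂ n, (fun n => Nat.rec (motive := fun _ => Set PP)
          (closure B') (fun k _ => O k) n) n) = closure B' ∩ ⋂ k, O k := by
        ext w
        simp only [mem_iInter, mem_inter_iff]
        constructor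
        · intro hw
          exact ⟨hw 0, fun k => hw (k + 1)⟩
        · rintro ⟨h0, h1⟩ n
          cases n with
          | zero => exact h0
          | succ k => exact h1 k
      rw [hseteq]
      exact subset_antisymm hsub1 hsub2
  -- assemble the global decomposition
  choose g hgoc hgeq using key
  refine ⟨fun σ n => if hσ : σ ∈ T then g σ hσ n else ∅, fun σ n => ?_, ?_⟩
  · by_cases hσ : σ ∈ T
    · simp only [dif_pos hσ]
      exact hgoc σ hσ n
    · simp only [dif_neg hσ]
      exact Or.inl isOpen_empty
  · ext p
    simp only [mem_iUnion, mem_iInter]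
    constructor
    · intro hp
      have hσT : {n | e ⟨p, hp⟩ ∈ 𝒰 n} ∈ T := ⟨⟨p, hp⟩, fun n => Iff.rfl⟩
      refine ⟨{n | e ⟨p, hp⟩ ∈ 𝒰 n}, fun n => ?_⟩
      simp only [dif_pos hσT]
      have hmem : p ∈ Subtype.val '' (e ⁻¹' A {n | e ⟨p, hp⟩ ∈ 𝒰 n}) :=
        ⟨⟨p, hp⟩, fun n => Iff.rfl, rfl⟩
      rw [hgeq _ hσT] at hmem
      exact mem_iInter.mp hmem n
    · rintro ⟨σ, hσ⟩
      by_cases hσT : σ ∈ T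
      · have hmem : p ∈ ⋂ n, g σ hσT n := mem_iInter.mpr fun n => by
          have := hσ n
          rwa [dif_pos hσT] at this
        rw [← hgeq σ hσT] at hmem
        obtain ⟨y, -, rfl⟩ := hmem
        exact y.2
      · have h0 : p ∈ (∅ : Set PP) := by simpa only [dif_neg hσT] using hσ 0
        exact absurd h0 (notMem_empty p)

private instance : TopologicalSpace.MetrizableSpace PP := by
  letI : MetricSpace BethOmegaType := TopologicalSpace.metrizableSpaceMetric BethOmegaType
  letI : MetricSpace PP := PiCountable.metricSpace
  exact inferInstance

private lemma counting_false (hallCS : ∀ Y : Set PP, HasCountableSeparation ↥Y) : False := by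
  classical
  -- notation
  set κ := bethOmega with hκ
  have haleph : Cardinal.aleph0 ≤ κ := aleph0_le_bethOmega
  have hcont : (2 : Cardinal) ^ Cardinal.aleph0 ≤ κ := bethNat_le_bethOmega 1
  have hmkB : #BethOmegaType = κ := Cardinal.mk_out bethOmega
  -- counting the open-or-closed subsets
  have hOC : #{S : Set PP // IsOpen S ∨ IsClosed S} ≤ 2 ^ κ := by
    have hcl : #{S : Set PP // IsClosed S} ≤ #{S : Set PP // IsOpen S} := by
      refine Cardinal.mk_le_of_injective (f := fun C : {S : Set PP // IsClosed S} =>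
        (⟨(C : Set PP)ᶜ, C.2.isOpen_compl⟩ : {S : Set PP // IsOpen S})) ?_
      rintro ⟨S, hS⟩ ⟨S', hS'⟩ hSeq
      have : Sᶜ = S'ᶜ := congrArg Subtype.val hSeq
      exact Subtype.ext (compl_injective this)
    have hinj : #{S : Set PP // IsOpen S ∨ IsClosed S} ≤
        #({S : Set PP // IsOpen S} × Bool) := by
      refine Cardinal.mk_le_of_injective
        (f := fun S : {S : Set PP // IsOpen S ∨ IsClosed S} =>
          if h : IsOpen S.1 then ((⟨S.1, h⟩ : {S : Set PP // IsOpen S}), true)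
          else (⟨S.1ᶜ, (S.2.resolve_left h).isOpen_compl⟩, false)) ?_
      rintro ⟨S, hS⟩ ⟨S', hS'⟩ hSeq
      by_cases h1 : IsOpen S <;> by_cases h2 : IsOpen S' <;>
        simp only [h1, h2, dite_true, dite_false, Prod.mk.injEq, Subtype.mk.injEq,
          and_true, and_false, Bool.true_eq_false, Bool.false_eq_true] at hSeq
      · exact Subtype.ext hSeq
      · exact Subtype.ext (compl_injective hSeq)
    have hsum : #({S : Set PP // IsOpen S} × Bool) ≤ 2 ^ κ := by
      rw [Cardinal.mk_prod, Cardinal.lift_id, Cardinal.lift_id, Cardinal.mk_bool]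
      calc #{S : Set PP // IsOpen S} * 2
          ≤ 2 ^ κ * 2 ^ κ := mul_le_mul' mk_opens_le
            (le_trans (by exact_mod_cast (Cardinal.nat_lt_aleph0 2).le) (haleph.trans (Cardinal.cantor κ).le))
        _ = 2 ^ κ := Cardinal.mul_eq_self (haleph.trans (Cardinal.cantor κ).le)
    exact hinj.trans hsum
  -- counting all candidate descriptions
  have hD : #(Set ℕ → ℕ → {S : Set PP // IsOpen S ∨ IsClosed S}) ≤ 2 ^ κ := by
    have h1 : #(Set ℕ → ℕ → {S : Set PP // IsOpen S ∨ IsClosed S}) =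
        (#{S : Set PP // IsOpen S ∨ IsClosed S} ^ (Cardinal.aleph0 : Cardinal)) ^
          ((2 : Cardinal) ^ (Cardinal.aleph0 : Cardinal)) := by
      rw [← Cardinal.mk_nat, Cardinal.power_def, ← Cardinal.mk_set (α := ℕ), Cardinal.power_def]
    have hexp : κ * (Cardinal.aleph0 * (2 : Cardinal) ^ (Cardinal.aleph0 : Cardinal)) ≤ κ := by
      have hsm : Cardinal.aleph0 * (2 : Cardinal) ^ (Cardinal.aleph0 : Cardinal) ≤ κ := by
        calc Cardinal.aleph0 * (2 : Cardinal) ^ (Cardinal.aleph0 : Cardinal)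
            ≤ κ * κ := mul_le_mul' haleph hcont
          _ = κ := Cardinal.mul_eq_self haleph
      calc κ * (Cardinal.aleph0 * (2 : Cardinal) ^ (Cardinal.aleph0 : Cardinal))
          ≤ κ * κ := mul_le_mul' le_rfl hsm
        _ = κ := Cardinal.mul_eq_self haleph
    calc #(Set ℕ → ℕ → {S : Set PP // IsOpen S ∨ IsClosed S})
        = (#{S : Set PP // IsOpen S ∨ IsClosed S} ^ (Cardinal.aleph0 : Cardinal)) ^
          ((2 : Cardinal) ^ (Cardinal.aleph0 : Cardinal)) := h1
      _ ≤ ((2 ^ κ) ^ (Cardinal.aleph0 : Cardinal)) ^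
          ((2 : Cardinal) ^ (Cardinal.aleph0 : Cardinal)) :=
            Cardinal.power_le_power_right (Cardinal.power_le_power_right hOC)
      _ = 2 ^ (κ * (Cardinal.aleph0 * (2 : Cardinal) ^ (Cardinal.aleph0 : Cardinal))) := by
            rw [← Cardinal.power_mul, ← Cardinal.power_mul]
      _ ≤ 2 ^ κ := Cardinal.power_le_power_left two_ne_zero hexp
  -- all subsets of `PP` are obtained from descriptions
  have hsurj : Function.Surjective
      (fun f : Set ℕ → ℕ → {S : Set PP // IsOpen S ∨ IsClosed S} =>
        ⋃ σ, ⋂ n, (f σ n : Set PP)) := by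
    intro Y
    obtain ⟨f, hoc, hYeq⟩ := decomposition Y (hallCS Y)
    exact ⟨fun σ n => ⟨f σ n, hoc σ n⟩, hYeq.symm⟩
  have hle : #(Set PP) ≤ 2 ^ κ := (Cardinal.mk_le_of_surjective hsurj).trans hD
  -- the lower bound `2 ^ κ ≤ #PP`
  have hPge : (2 : Cardinal) ^ κ ≤ #PP := by
    have h1 : (2 : Cardinal) ^ κ ≤ 2 ^ Cardinal.sum bethNat :=
      Cardinal.power_le_power_left two_ne_zero (Cardinal.iSup_le_sum bethNat)
    have h2 : (2 : Cardinal) ^ Cardinal.sum bethNat =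
        Cardinal.prod fun n => (2 : Cardinal) ^ bethNat n := Cardinal.power_sum 2 bethNat
    have h3 : (Cardinal.prod fun n => (2 : Cardinal) ^ bethNat n) ≤
        Cardinal.prod fun _ : ℕ => κ := by
      refine Cardinal.prod_le_prod _ _ fun n => ?_
      have : (2 : Cardinal) ^ bethNat n = bethNat (n + 1) := rfl
      rw [this]
      exact bethNat_le_bethOmega (n + 1)
    have h4 : (Cardinal.prod fun _ : ℕ => κ) = κ ^ (Cardinal.aleph0 : Cardinal) := by
      rw [Cardinal.prod_const', Cardinal.mk_nat]
    have h5 : κ ^ (Cardinal.aleph0 : Cardinal) = #PP := by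
      rw [← hmkB, ← Cardinal.mk_nat, Cardinal.power_def]
    calc (2 : Cardinal) ^ κ ≤ 2 ^ Cardinal.sum bethNat := h1
      _ = Cardinal.prod fun n => (2 : Cardinal) ^ bethNat n := h2
      _ ≤ Cardinal.prod fun _ : ℕ => κ := h3
      _ = κ ^ (Cardinal.aleph0 : Cardinal) := h4
      _ = #PP := h5
  -- contradiction
  have hfinal : (2 : Cardinal) ^ ((2 : Cardinal) ^ κ) ≤ 2 ^ κ := by
    calc (2 : Cardinal) ^ ((2 : Cardinal) ^ κ)
        ≤ 2 ^ #PP := Cardinal.power_le_power_left two_ne_zero hPge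
      _ = #(Set PP) := Cardinal.mk_set.symm
      _ ≤ 2 ^ κ := hle
  exact absurd hfinal (not_le.mpr (Cardinal.cantor _))

end BethAux

/-- The completely metrizable space `(ℶ_ω)^ω` (the countable power of the
discrete space of cardinality `ℶ_ω`) contains a metrizable subspace without countable
separation; in particular there exists a metrizable space without countable separation. -/
theorem exists_metrizable_subspace_without_countableSeparation :
    ∃ Y : Set (ℕ → BethOmegaType),
      TopologicalSpace.MetrizableSpace ↥Y ∧ ¬ HasCountableSeparation ↥Y := by
  by_contra hcon
  push_neg at hcon
  exact counting_false fun Y => hcon Y inferInstance
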